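/- (Submodularity of a convex pairwise term) Let h : ℝ → ℝ be a convex function. Then for all integers a, b, c, d: h((max a c) − (max b d)) + h((min a c) − (min b d)) ≤ h(a − b) + h(c − d). -/

import Mathlib

/-- If `h` is convex and `x ≤ p ≤ y`, then `h p + h (x + y - p) ≤ h x + h y`. -/
lemma convex_aux (h : ℝ → ℝ) (hconv : ConvexOn ℝ Set.univ h) {x y p : ℝ}
    (hxp : x ≤ p) (hpy : p ≤ y) : h p + h (x + y - p) ≤ h x + h y := by
  rcases eq_or_lt_of_le (hxp.trans hpy) with hxy | hxy
  · have hp : p = x := le_antisymm (hxy ▸ hpy) hxp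
    subst hp
    have : p + y - p = y := by ring
    rw [this]
  · set t : ℝ := (y - p) / (y - x) with ht
    have hyx : 0 < y - x := by linarith
    have ht0 : 0 ≤ t := div_nonneg (by linarith) hyx.le
    have ht1 : t ≤ 1 := by
      rw [div_le_one hyx]; linarith
    have h1t : 0 ≤ 1 - t := by linarith
    have e1 : p = t * x + (1 - t) * y := by
      have htm : t * (y - x) = y - p := by rw [ht]; exact div_mul_cancel₀ _ hyx.ne'
      linear_combination htm
    have e2 : x + y - p = (1 - t) * x + t * y := by
      have htm : t * (y - x) = y - p := by rw [ht]; exact div_mul_cancel₀ _ hyx.ne'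
      linear_combination -htm
    have H1 := hconv.2 (Set.mem_univ x) (Set.mem_univ y) ht0 h1t (by ring)
    have H2 := hconv.2 (Set.mem_univ x) (Set.mem_univ y) h1t ht0 (by ring)
    simp only [smul_eq_mul] at H1 H2
    rw [e2, e1]
    nlinarith [H1, H2]

/-- Submodularity of a convex pairwise term: for a convex `h : ℝ → ℝ` and integer labels,
`h(x_i - x_j)` satisfies the submodularity inequality with respect to max/min of labels. -/
theorem convex_pairwise_submodular (h : ℝ → ℝ) (hconv : ConvexOn ℝ Set.univ h)
    (a b c d : ℤ) :
    h (((max a c : ℤ) : ℝ) - ((max b d : ℤ) : ℝ)) +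
        h (((min a c : ℤ) : ℝ) - ((min b d : ℤ) : ℝ)) ≤
      h ((a : ℝ) - (b : ℝ)) + h ((c : ℝ) - (d : ℝ)) := by
  set u : ℤ := max a c - max b d with hu
  set v : ℤ := min a c - min b d with hv
  have hsum : u + v = (a - b) + (c - d) := by omega
  have hub : min (a - b) (c - d) ≤ u ∧ u ≤ max (a - b) (c - d) := by
    constructor <;> omega
  have hx : ((min (a - b) (c - d) : ℤ) : ℝ) ≤ (u : ℝ) := by exact_mod_cast hub.1
  have hy : ((u : ℤ) : ℝ) ≤ ((max (a - b) (c - d) : ℤ) : ℝ) := by exact_mod_cast hub.2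
  have key := convex_aux h hconv hx hy
  have hveq : ((min (a - b) (c - d) : ℤ) : ℝ) + ((max (a - b) (c - d) : ℤ) : ℝ) - (u : ℝ)
      = (v : ℝ) := by
    have : min (a - b) (c - d) + max (a - b) (c - d) - u = v := by omega
    exact_mod_cast this
  rw [hveq] at key
  have hsplit : h ((min (a - b) (c - d) : ℤ) : ℝ) + h ((max (a - b) (c - d) : ℤ) : ℝ)
      = h ((a : ℝ) - (b : ℝ)) + h ((c : ℝ) - (d : ℝ)) := by
    rcases le_total (a - b) (c - d) with hle | hle
    · rw [min_eq_left hle, max_eq_right hle]; push_cast; ring_nf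
    · rw [min_eq_right hle, max_eq_left hle]; push_cast; ring_nf
  have hca : ((u : ℤ) : ℝ) = ((max a c : ℤ) : ℝ) - ((max b d : ℤ) : ℝ) := by push_cast [hu]; ring
  have hcb : ((v : ℤ) : ℝ) = ((min a c : ℤ) : ℝ) - ((min b d : ℤ) : ℝ) := by push_cast [hv]; ring
  rw [hca, hcb] at key
  linarith [key, hsplit.le, hsplit.ge]
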